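/- Consider the simple regression model y = xβ₀ + e with x and e independent real-valued random variables having finite second moments, E[e] = 0 and E[x²] > 1/(a − 1), where λ > 0 and a > 2. If |β₀| > aλ, then β₀ itself minimizes the SCAD objective g(β) = E[(y − xβ)²] + 2·J_SCAD(β) over β ∈ ℝ; that is, the SCAD functional is unbiased at the model for large parameter values. -/

import Mathlib

open MeasureTheory

/-- In the simple regression model `y = xβ₀ + e` with `x` and `e`
independent and `E[e] = 0`, if `|β₀| > aλ` then `β₀` itself minimizes the SCAD
objective `g(β) = E[(y - xβ)²] + 2·J_SCAD(β)`: the SCAD functional is unbiased at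
the model for large parameter values. -/
theorem scad_unbiased_for_large_parameters
    {Ω : Type*} [MeasurableSpace Ω] (μ : Measure Ω) [IsProbabilityMeasure μ]
    (x e : Ω → ℝ)
    (hind : ProbabilityTheory.IndepFun x e μ)
    (hx1 : Integrable x μ) (he1 : Integrable e μ)
    (hx2 : Integrable (fun ω => (x ω) ^ 2) μ)
    (he2 : Integrable (fun ω => (e ω) ^ 2) μ)
    (hmean : ∫ ω, e ω ∂μ = 0)
    (lam a : ℝ) (hlam : 0 < lam) (ha : 2 < a)
    (hEx : 1 / (a - 1) < ∫ ω, (x ω) ^ 2 ∂μ)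
    (β₀ : ℝ) (y : Ω → ℝ) (hy : ∀ ω, y ω = x ω * β₀ + e ω)
    (hβ₀ : a * lam < |β₀|)
    (J : ℝ → ℝ)
    (hJ : ∀ β : ℝ, J β =
      if |β| ≤ lam then lam * |β|
      else if |β| ≤ a * lam then
        lam * (-(|β| - a * lam) ^ 2 / (2 * (a - 1) * lam) + lam * (a + 1) / 2)
      else lam ^ 2 * (a + 1) / 2) :
    ∀ β : ℝ,
      (∫ ω, (y ω - x ω * β₀) ^ 2 ∂μ) + 2 * J β₀ ≤
        (∫ ω, (y ω - x ω * β) ^ 2 ∂μ) + 2 * J β := by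
  intro β
  have ha1 : (0:ℝ) < a - 1 := by linarith
  set S := ∫ ω, (x ω) ^ 2 ∂μ with hS
  have hSpos : 0 < S := lt_trans (by positivity) hEx
  have hxe : Integrable (fun ω => x ω * e ω) μ := hind.integrable_mul hx1 he1
  have hExe : ∫ ω, x ω * e ω ∂μ = 0 := by
    have h : ∫ ω, x ω * e ω ∂μ = (∫ ω, x ω ∂μ) * ∫ ω, e ω ∂μ :=
      hind.integral_fun_mul_eq_mul_integral hx1.1 he1.1
    rw [h, hmean, mul_zero]
  -- key integral identity
  have key : ∀ c : ℝ, ∫ ω, (y ω - x ω * c) ^ 2 ∂μ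
      = (β₀ - c) ^ 2 * S + ∫ ω, (e ω) ^ 2 ∂μ := by
    intro c
    have heq : (fun ω => (y ω - x ω * c) ^ 2)
        = fun ω => (β₀ - c) ^ 2 * (x ω) ^ 2 + ((2 * (β₀ - c)) * (x ω * e ω) + (e ω) ^ 2) := by
      funext ω; rw [hy]; ring
    have hi1 : Integrable (fun ω => (β₀ - c) ^ 2 * (x ω) ^ 2) μ := hx2.const_mul _
    have hi2 : Integrable (fun ω => (2 * (β₀ - c)) * (x ω * e ω)) μ := hxe.const_mul _
    have hi3 : Integrable (fun ω => (2 * (β₀ - c)) * (x ω * e ω) + (e ω) ^ 2) μ := hi2.add he2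
    rw [heq, integral_add hi1 hi3, integral_add hi2 he2, integral_const_mul,
      integral_const_mul, hExe, mul_zero, zero_add, ← hS]
  rw [key β₀, key β, sub_self]
  -- reduces to real inequality
  have hJβ₀ : J β₀ = lam ^ 2 * (a + 1) / 2 := by
    rw [hJ]
    have h1 : ¬ |β₀| ≤ lam := by nlinarith
    have h2 : ¬ |β₀| ≤ a * lam := by linarith
    simp [h1, h2]
  rw [hJβ₀]
  have hd : a * lam - |β| ≤ |β₀ - β| := by
    have := abs_sub_abs_le_abs_sub β₀ β
    linarith
  have hd0 : 0 ≤ |β₀ - β| := abs_nonneg _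
  have hdsq : (β₀ - β) ^ 2 = |β₀ - β| ^ 2 := (sq_abs _).symm
  have ht0 : 0 ≤ |β| := abs_nonneg _
  rw [hJ β]
  rcases le_or_gt |β| lam with h1 | h1
  · simp only [h1, if_pos]
    -- need: lam^2*(a+1) ≤ d^2*S + 2*lam*|β|
    have hd2 : (a * lam - |β|) ^ 2 ≤ |β₀ - β| ^ 2 := by
      apply pow_le_pow_left₀ _ hd
      nlinarith
    have hS' : 1 < S * (a - 1) := by
      rw [div_lt_iff₀ ha1] at hEx; linarith
    nlinarith [sq_nonneg (|β| - lam), sq_nonneg (a * lam - |β|), sq_nonneg (β₀ - β),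
      mul_le_mul_of_nonneg_right hd2 (le_of_lt hSpos)]
  · rcases le_or_gt |β| (a * lam) with h2 | h2
    · have h1' : ¬ |β| ≤ lam := not_le.mpr h1
      simp only [h1', if_neg, h2, if_pos, if_false]
      have hsimp : lam * (-(|β| - a * lam) ^ 2 / (2 * (a - 1) * lam) + lam * (a + 1) / 2)
          = -((|β| - a * lam) ^ 2 / (2 * (a - 1))) + lam ^ 2 * (a + 1) / 2 := by
        field_simp
      rw [hsimp]
      have hd2 : (a * lam - |β|) ^ 2 ≤ |β₀ - β| ^ 2 := by
        apply pow_le_pow_left₀ _ hd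
        linarith
      have hS' : 1 < S * (a - 1) := by
        rw [div_lt_iff₀ ha1] at hEx; linarith
      have key2 : (|β| - a * lam) ^ 2 / (2 * (a - 1)) ≤ (β₀ - β) ^ 2 * S / 2 := by
        rw [div_le_div_iff₀ (by linarith) (by norm_num)]
        have h3 : (a * lam - |β|) ^ 2 ≤ (β₀ - β) ^ 2 := by rw [hdsq]; exact hd2
        have h4 : (β₀ - β) ^ 2 ≤ (β₀ - β) ^ 2 * (S * (a - 1)) :=
          le_mul_of_one_le_right (sq_nonneg _) hS'.le
        nlinarith [h3, h4]
      linarith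
    · have h1' : ¬ |β| ≤ lam := not_le.mpr h1
      have h2' : ¬ |β| ≤ a * lam := not_le.mpr h2
      simp only [h1', h2', if_neg, if_false]
      nlinarith [sq_nonneg (β₀ - β), mul_nonneg (sq_nonneg (β₀ - β)) (le_of_lt hSpos)]
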